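/- Let n ∈ ℕ, n ≥ 1, and set ñ = 4n−3. Let F be the ñ×ñ unitary DFT matrix and 𝒮_z : ℂ^n → ℂ^{ñ} the zero-padded symmetrization. Then for all x₁, x₂ ∈ ℂ^n with (x₁)_0, (x₂)_0 ∈ ℝ, if |F 𝒮_z(x₁)|² = |F 𝒮_z(x₂)|² (componentwise equality of squared moduli), then x₁ = x₂ or x₁ = −x₂. -/

import Mathlib

open scoped BigOperators

/-- Circular convolution on `ℂ^m`: `(u ⊛ v)_k = ∑_l u_l v_{(k-l) mod m}`. -/
noncomputable def cconv {m : ℕ} (u v : Fin m → ℂ) : Fin m → ℂ :=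
  fun k => ∑ l : Fin m, u l * v (k - l)

/-- Circular correlation on `ℂ^m`: `(u ⋆ v)_k = ∑_l u_l conj (v_{(k+l) mod m})`. -/
noncomputable def ccorr {m : ℕ} (u v : Fin m → ℂ) : Fin m → ℂ :=
  fun k => ∑ l : Fin m, u l * (starRingEnd ℂ) (v (k + l))

/-- Euclidean (ℓ²) norm of a vector. -/
noncomputable def euclNorm {m : ℕ} {E : Type*} [SeminormedAddGroup E] (x : Fin m → E) : ℝ :=
  Real.sqrt (∑ i, ‖x i‖ ^ 2)

/-- Zero padding `ℂ^n → ℂ^m` (entries of `x` followed by zeros). -/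
def pad (n m : ℕ) (x : Fin n → ℂ) : Fin m → ℂ :=
  fun k => if h : (k : ℕ) < n then x ⟨k, h⟩ else 0

/-- `x` has at most `s` nonzero entries. -/
def sparse {n : ℕ} (s : ℕ) (x : Fin n → ℂ) : Prop :=
  Set.ncard {i | x i ≠ 0} ≤ s

/-- The unitary DFT matrix `F_{kl} = m^{-1/2} exp(2πi kl/m)`. -/
noncomputable def dft (m : ℕ) : Matrix (Fin m) (Fin m) ℂ :=
  fun k l => ((Real.sqrt m : ℝ) : ℂ)⁻¹ *
    Complex.exp (2 * (Real.pi : ℂ) * Complex.I * ((k : ℕ) : ℂ) * ((l : ℕ) : ℂ) / (m : ℂ))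

/-- Cyclic shift: `(S x)_k = x_{(k-1) mod m}`. -/
def shiftOp {m : ℕ} (x : Fin m → ℂ) : Fin m → ℂ :=
  fun k => x ⟨((k : ℕ) + (m - 1)) % m, Nat.mod_lt _ (by have := k.isLt; omega)⟩

/-- Time reversal: `(Γ x)_k = x_{(-k) mod m}`. -/
def rev {m : ℕ} (u : Fin m → ℂ) : Fin m → ℂ := fun k => u (-k)

/-- Symmetrization `𝒮 : ℂ^n → ℂ^{2n-1}`,
`𝒮(x) = (x_0, …, x_{n-1}, conj x_{n-1}, …, conj x_1)`. -/
noncomputable def symmetrize (n : ℕ) (x : Fin n → ℂ) : Fin (2 * n - 1) → ℂ :=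
  fun k =>
    if h : (k : ℕ) < n then x ⟨k, h⟩
    else (starRingEnd ℂ) (x ⟨2 * n - 1 - (k : ℕ), by have := k.isLt; omega⟩)

/-- Zero-padded symmetrization `𝒮_z : ℂ^n → ℂ^{4n-3}`, `𝒮_z(x) = 𝒮((x, 0_{n-1}))`. -/
noncomputable def symmetrizeZ (n : ℕ) (x : Fin n → ℂ) : Fin (4 * n - 3) → ℂ :=
  fun k => symmetrize (2 * n - 1) (pad n (2 * n - 1) x) ⟨(k : ℕ), by have := k.isLt; omega⟩

/-- `𝒮_z' : ℂ^n → ℂ^{4n-1}`,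
`𝒮_z'(x) = (0_n, x_0, …, x_{n-1}, conj x_{n-1}, …, conj x_0, 0_{n-1})`. -/
noncomputable def symmetrizeZ' (n : ℕ) (x : Fin n → ℂ) : Fin (4 * n - 1) → ℂ :=
  fun k =>
    if _ : (k : ℕ) < n then 0
    else if h2 : (k : ℕ) < 2 * n then x ⟨(k : ℕ) - n, by omega⟩
    else if h3 : (k : ℕ) < 3 * n then (starRingEnd ℂ) (x ⟨3 * n - 1 - (k : ℕ), by omega⟩)
    else 0


section PRaux
open Complex Polynomial

noncomputable def zeta (m : ℕ) (k : Fin m) : ℂ :=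
  Complex.exp (2 * (Real.pi : ℂ) * Complex.I * ((k:ℕ):ℂ) / (m:ℂ))

lemma zeta_ne_zero (m : ℕ) (k : Fin m) : zeta m k ≠ 0 := Complex.exp_ne_zero _

lemma zeta_pow_m (m : ℕ) (hm : 0 < m) (k : Fin m) : zeta m k ^ m = 1 := by
  rw [zeta, ← Complex.exp_nat_mul]
  have hm' : (m:ℂ) ≠ 0 := Nat.cast_ne_zero.2 hm.ne'
  have : (m:ℂ) * (2 * (Real.pi : ℂ) * Complex.I * ((k:ℕ):ℂ) / (m:ℂ))
      = ((k:ℕ):ℤ) * (2 * (Real.pi:ℂ) * Complex.I) := by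
    field_simp; push_cast; ring
  rw [this, Complex.exp_int_mul_two_pi_mul_I]

lemma zeta_pow (m : ℕ) (k : Fin m) (l : ℕ) :
    zeta m k ^ l = Complex.exp (2 * (Real.pi : ℂ) * Complex.I * ((k:ℕ):ℂ) * (l:ℂ) / (m:ℂ)) := by
  rw [zeta, ← Complex.exp_nat_mul]
  ring_nf

lemma conj_zeta_pow (m : ℕ) (hm : 0 < m) (k : Fin m) (l : ℕ) (hl : l ≤ m) :
    (starRingEnd ℂ) (zeta m k ^ l) = zeta m k ^ (m - l) := by
  have h1 : zeta m k ^ (m - l) * zeta m k ^ l = 1 := by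
    rw [← pow_add, Nat.sub_add_cancel hl, zeta_pow_m m hm]
  have h2 : (starRingEnd ℂ) (zeta m k ^ l) * zeta m k ^ l = 1 := by
    rw [zeta_pow, ← Complex.exp_conj, ← Complex.exp_add]
    have : (starRingEnd ℂ) (2 * (Real.pi : ℂ) * Complex.I * ((k:ℕ):ℂ) * (l:ℂ) / (m:ℂ))
        = -(2 * (Real.pi : ℂ) * Complex.I * ((k:ℕ):ℂ) * (l:ℂ) / (m:ℂ)) := by
      simp [map_div₀, map_mul, Complex.conj_I, map_ofNat]
      ring
    rw [this, neg_add_cancel, Complex.exp_zero]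
  have h3 := h1.trans h2.symm
  exact (mul_right_cancel₀ (pow_ne_zero _ (zeta_ne_zero m k)) h3.symm)

lemma zeta_injective (m : ℕ) (hm : 0 < m) : Function.Injective (zeta m) := by
  intro k k' h
  rw [zeta, zeta, Complex.exp_eq_exp_iff_exists_int] at h
  obtain ⟨t, ht⟩ := h
  have hm' : (m:ℂ) ≠ 0 := Nat.cast_ne_zero.2 hm.ne'
  have hπ : (Real.pi:ℂ) ≠ 0 := by exact_mod_cast Real.pi_ne_zero
  have hI := Complex.I_ne_zero
  have hC : ((k:ℕ):ℂ) = ((k':ℕ):ℂ) + t * m := by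
    field_simp at ht
    have h2 : (2:ℂ) * Real.pi * Complex.I ≠ 0 :=
      mul_ne_zero (mul_ne_zero two_ne_zero hπ) hI
    have h3 : (2:ℂ) * Real.pi * Complex.I * ((k:ℕ):ℂ)
        = (2:ℂ) * Real.pi * Complex.I * (((k':ℕ):ℂ) + t * m) := by
      linear_combination (2 * (Real.pi:ℂ) * Complex.I) * ht
    exact mul_left_cancel₀ h2 h3
  have hz : ((k:ℕ):ℤ) = ((k':ℕ):ℤ) + t * m := by exact_mod_cast hC
  have h1 : ((k:ℕ):ℤ) < m := by exact_mod_cast k.isLt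
  have h2 : ((k':ℕ):ℤ) < m := by exact_mod_cast k'.isLt
  have h3 : 0 ≤ ((k:ℕ):ℤ) := Int.natCast_nonneg _
  have h4 : 0 ≤ ((k':ℕ):ℤ) := Int.natCast_nonneg _
  have hm'' : (0:ℤ) < m := by exact_mod_cast hm
  have ht0 : t = 0 := by
    rcases lt_trichotomy t 0 with hlt | rfl | hgt
    · have : t ≤ -1 := by omega
      nlinarith
    · rfl
    · have : 1 ≤ t := by omega
      nlinarith
  rw [ht0, zero_mul, add_zero] at hz
  exact Fin.ext (by exact_mod_cast hz : (k:ℕ) = (k':ℕ))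

/-- extension of `y` to ℕ -/
noncomputable def Yext (n : ℕ) (y : Fin n → ℂ) : ℕ → ℂ :=
  fun i => if h : i < n then y ⟨i, h⟩ else 0

lemma symmetrizeZ_apply (n : ℕ) (hn : 0 < n) (y : Fin n → ℂ) (l : Fin (4 * n - 3)) :
    symmetrizeZ n y l =
      if (l:ℕ) < n then Yext n y (l:ℕ)
      else if 3 * n - 2 ≤ (l:ℕ) then (starRingEnd ℂ) (Yext n y (4 * n - 3 - (l:ℕ)))
      else 0 := by
  have hl := l.isLt
  unfold symmetrizeZ symmetrize pad Yext
  simp only [Fin.val_mk]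
  split_ifs <;> first
    | rfl
    | omega
    | (exact congrArg (starRingEnd ℂ) (congrArg y (Fin.mk_eq_mk.mpr (by omega))))
    | exact map_zero _

lemma dft_symmetrizeZ (n : ℕ) (hn : 0 < n) (y : Fin n → ℂ) (k : Fin (4 * n - 3)) :
    (dft (4 * n - 3)).mulVec (symmetrizeZ n y) k =
      ((Real.sqrt ((4 * n - 3 : ℕ) : ℝ) : ℝ) : ℂ)⁻¹ *
        ((∑ l ∈ Finset.range n, Yext n y l * zeta (4 * n - 3) k ^ l) +
         ∑ j ∈ Finset.Ico 1 n, (starRingEnd ℂ) (Yext n y j) * zeta (4 * n - 3) k ^ (4 * n - 3 - j)) := by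
  have hm0 : 0 < 4 * n - 3 := by omega
  set ζ := zeta (4 * n - 3) k with hζ
  set c : ℂ := ((Real.sqrt (((4 * n - 3 : ℕ)):ℝ) : ℝ) : ℂ)⁻¹ with hc
  set f : ℕ → ℂ := fun i => c * ζ ^ i *
      (if i < n then Yext n y i
       else if 3 * n - 2 ≤ i then (starRingEnd ℂ) (Yext n y (4 * n - 3 - i)) else 0) with hf
  have hstep : (dft (4 * n - 3)).mulVec (symmetrizeZ n y) k = ∑ i ∈ Finset.range (4 * n - 3), f i := by
    show (∑ l : Fin (4 * n - 3), dft (4 * n - 3) k l * symmetrizeZ n y l) = _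
    rw [← Fin.sum_univ_eq_sum_range f (4 * n - 3)]
    refine Finset.sum_congr rfl (fun l _ => ?_)
    have hd : dft (4 * n - 3) k l = c * ζ ^ (l:ℕ) := by
      rw [hζ, zeta_pow]; rfl
    rw [symmetrizeZ_apply n hn y l, hd, hf]
  rw [hstep, Finset.range_eq_Ico,
    ← Finset.sum_Ico_consecutive _ (show 0 ≤ 3*n-2 by omega) (show 3*n-2 ≤ 4*n-3 by omega),
    ← Finset.sum_Ico_consecutive _ (show 0 ≤ n by omega) (show n ≤ 3*n-2 by omega)]
  have hmid : ∑ i ∈ Finset.Ico n (3*n-2), f i = 0 := by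
    refine Finset.sum_eq_zero (fun i hi => ?_)
    rw [Finset.mem_Ico] at hi
    rw [hf]
    simp only []
    rw [if_neg (by omega), if_neg (by omega), mul_zero]
  have hfirst : ∑ i ∈ Finset.Ico 0 n, f i = ∑ l ∈ Finset.range n, c * (Yext n y l * ζ ^ l) := by
    rw [← Finset.range_eq_Ico]
    refine Finset.sum_congr rfl (fun i hi => ?_)
    rw [Finset.mem_range] at hi
    rw [hf]
    simp only []
    rw [if_pos hi]; ring
  have hthird : ∑ i ∈ Finset.Ico (3*n-2) (4*n-3), f i
      = ∑ j ∈ Finset.Ico 1 n, c * ((starRingEnd ℂ) (Yext n y j) * ζ ^ (4*n-3 - j)) := by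
    refine Finset.sum_nbij' (fun i => 4*n-3 - i) (fun j => 4*n-3 - j) ?_ ?_ ?_ ?_ ?_
    · intro i hi; simp only [Finset.mem_Ico] at *; omega
    · intro j hj; simp only [Finset.mem_Ico] at *; omega
    · intro i hi; simp only [Finset.mem_Ico] at hi; omega
    · intro j hj; simp only [Finset.mem_Ico] at hj; omega
    · intro i hi
      rw [Finset.mem_Ico] at hi
      rw [hf]
      simp only []
      rw [if_neg (by omega), if_pos (by omega)]
      rw [show 4*n-3 - (4*n-3 - i) = i from by omega]
      ring
  rw [hmid, hfirst, hthird, add_zero, mul_add, Finset.mul_sum, Finset.mul_sum, Finset.range_eq_Ico]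

lemma conj_dft_symmetrizeZ (n : ℕ) (hn : 0 < n) (y : Fin n → ℂ)
    (hy0 : (y ⟨0, hn⟩).im = 0) (k : Fin (4 * n - 3)) :
    (starRingEnd ℂ) ((dft (4 * n - 3)).mulVec (symmetrizeZ n y) k)
      = (dft (4 * n - 3)).mulVec (symmetrizeZ n y) k := by
  have hm0 : 0 < 4 * n - 3 := by omega
  rw [dft_symmetrizeZ n hn y k]
  set ζ := zeta (4 * n - 3) k with hζ
  have hY0 : (starRingEnd ℂ) (Yext n y 0) = Yext n y 0 := by
    have h0 : Yext n y 0 = y ⟨0, hn⟩ := by unfold Yext; rw [dif_pos hn]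
    rw [h0, Complex.conj_eq_iff_im]
    exact hy0
  have hc : (starRingEnd ℂ) (((Real.sqrt ((4 * n - 3 : ℕ) : ℝ) : ℝ) : ℂ)⁻¹)
      = (((Real.sqrt ((4 * n - 3 : ℕ) : ℝ) : ℝ) : ℂ)⁻¹) := by
    rw [map_inv₀, Complex.conj_ofReal]
  rw [map_mul, hc, map_add, map_sum, map_sum]
  have e1 : ∑ l ∈ Finset.range n, (starRingEnd ℂ) (Yext n y l * ζ ^ l)
      = Yext n y 0 + ∑ l ∈ Finset.Ico 1 n, (starRingEnd ℂ) (Yext n y l) * ζ ^ (4*n-3 - l) := by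
    rw [Finset.range_eq_Ico, Finset.sum_eq_sum_Ico_succ_bot hn]
    congr 1
    · rw [pow_zero, mul_one, hY0]
    · refine Finset.sum_congr rfl (fun l hl => ?_)
      rw [Finset.mem_Ico] at hl
      rw [map_mul, conj_zeta_pow _ hm0 k l (by omega)]
  have e2 : ∑ j ∈ Finset.Ico 1 n, (starRingEnd ℂ) ((starRingEnd ℂ) (Yext n y j) * ζ ^ (4*n-3 - j))
      = ∑ j ∈ Finset.Ico 1 n, Yext n y j * ζ ^ j := by
    refine Finset.sum_congr rfl (fun j hj => ?_)
    rw [Finset.mem_Ico] at hj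
    rw [map_mul, Complex.conj_conj, conj_zeta_pow _ hm0 k _ (by omega),
      show 4*n-3 - (4*n-3 - j) = j from by omega]
  rw [e1, e2, Finset.range_eq_Ico, Finset.sum_eq_sum_Ico_succ_bot hn, pow_zero, mul_one]
  ring

noncomputable def Qpoly (n : ℕ) (y : Fin n → ℂ) : Polynomial ℂ :=
  ∑ l ∈ Finset.range n, Polynomial.C (Yext n y l) * Polynomial.X ^ (l + (n - 1)) +
  ∑ j ∈ Finset.Ico 1 n, Polynomial.C ((starRingEnd ℂ) (Yext n y j)) * Polynomial.X ^ (n - 1 - j)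

lemma Qpoly_natDegree_lt (n : ℕ) (hn : 0 < n) (y : Fin n → ℂ) :
    (Qpoly n y).natDegree < 2 * n - 1 := by
  have h1 : (Qpoly n y).natDegree ≤ 2 * n - 2 := by
    refine le_trans (Polynomial.natDegree_add_le _ _) (max_le ?_ ?_)
    · refine Polynomial.natDegree_sum_le_of_forall_le _ _ (fun l hl => ?_)
      rw [Finset.mem_range] at hl
      refine le_trans (Polynomial.natDegree_mul_le) ?_
      rw [Polynomial.natDegree_C, Polynomial.natDegree_X_pow]
      omega
    · refine Polynomial.natDegree_sum_le_of_forall_le _ _ (fun j hj => ?_)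
      rw [Finset.mem_Ico] at hj
      refine le_trans (Polynomial.natDegree_mul_le) ?_
      rw [Polynomial.natDegree_C, Polynomial.natDegree_X_pow]
      omega
  omega

lemma Qpoly_coeff (n : ℕ) (hn : 0 < n) (y : Fin n → ℂ) (i : Fin n) :
    (Qpoly n y).coeff ((i : ℕ) + (n - 1)) = y i := by
  unfold Qpoly
  rw [Polynomial.coeff_add, Polynomial.finset_sum_coeff, Polynomial.finset_sum_coeff]
  have e2 : ∑ j ∈ Finset.Ico 1 n,
      (Polynomial.C ((starRingEnd ℂ) (Yext n y j)) * Polynomial.X ^ (n - 1 - j)).coeff ((i:ℕ) + (n-1)) = 0 := by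
    refine Finset.sum_eq_zero (fun j hj => ?_)
    rw [Finset.mem_Ico] at hj
    rw [Polynomial.coeff_C_mul, Polynomial.coeff_X_pow, if_neg (by omega), mul_zero]
  rw [e2, add_zero]
  rw [Finset.sum_eq_single (i : ℕ)]
  · rw [Polynomial.coeff_C_mul, Polynomial.coeff_X_pow, if_pos rfl, mul_one]
    unfold Yext
    rw [dif_pos i.isLt]
  · intro l hl hne
    rw [Finset.mem_range] at hl
    rw [Polynomial.coeff_C_mul, Polynomial.coeff_X_pow, if_neg (by omega), mul_zero]
  · intro hmem
    exact absurd (Finset.mem_range.mpr i.isLt) hmem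

lemma Qpoly_eq_zero (n : ℕ) (hn : 0 < n) (y : Fin n → ℂ) (h : Qpoly n y = 0) : y = 0 := by
  funext i
  have := Qpoly_coeff n hn y i
  rw [h, Polynomial.coeff_zero] at this
  exact this.symm

lemma Qpoly_eval (n : ℕ) (hn : 0 < n) (y : Fin n → ℂ) (k : Fin (4 * n - 3)) :
    (dft (4 * n - 3)).mulVec (symmetrizeZ n y) k * zeta (4 * n - 3) k ^ (n - 1) =
      ((Real.sqrt ((4 * n - 3 : ℕ) : ℝ) : ℝ) : ℂ)⁻¹ * (Qpoly n y).eval (zeta (4 * n - 3) k) := by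
  have hm0 : 0 < 4 * n - 3 := by omega
  rw [dft_symmetrizeZ n hn y k]
  unfold Qpoly
  rw [Polynomial.eval_add, Polynomial.eval_finset_sum, Polynomial.eval_finset_sum]
  set ζ := zeta (4 * n - 3) k with hζ
  rw [mul_assoc, add_mul, Finset.sum_mul, Finset.sum_mul]
  congr 1
  congr 1
  · refine Finset.sum_congr rfl (fun l hl => ?_)
    rw [Finset.mem_range] at hl
    rw [Polynomial.eval_mul, Polynomial.eval_C, Polynomial.eval_pow, Polynomial.eval_X,
      mul_assoc, ← pow_add]
  · refine Finset.sum_congr rfl (fun j hj => ?_)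
    rw [Finset.mem_Ico] at hj
    rw [Polynomial.eval_mul, Polynomial.eval_C, Polynomial.eval_pow, Polynomial.eval_X,
      mul_assoc, ← pow_add,
      show 4*n-3 - j + (n-1) = (4*n-3) + (n - 1 - j) from by omega,
      pow_add, zeta_pow_m _ hm0, one_mul]

lemma symmetrizeZ_sub (n : ℕ) (x₁ x₂ : Fin n → ℂ) :
    symmetrizeZ n (x₁ - x₂) = symmetrizeZ n x₁ - symmetrizeZ n x₂ := by
  funext l
  simp only [symmetrizeZ, symmetrize, pad, Pi.sub_apply]
  split_ifs <;> simp [map_sub]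

lemma symmetrizeZ_add (n : ℕ) (x₁ x₂ : Fin n → ℂ) :
    symmetrizeZ n (x₁ + x₂) = symmetrizeZ n x₁ + symmetrizeZ n x₂ := by
  funext l
  simp only [symmetrizeZ, symmetrize, pad, Pi.add_apply]
  split_ifs <;> simp [map_add]


end PRaux

/-- Injectivity up to global sign of magnitude Fourier measurements of
zero-padded symmetrized vectors. -/
theorem injectivity_symmetrizeZ (n : ℕ) (hn : 0 < n) (x₁ x₂ : Fin n → ℂ)
    (h₁ : (x₁ ⟨0, hn⟩).im = 0) (h₂ : (x₂ ⟨0, hn⟩).im = 0)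
    (h : ∀ k, ‖(dft (4 * n - 3)).mulVec (symmetrizeZ n x₁) k‖ ^ 2 =
      ‖(dft (4 * n - 3)).mulVec (symmetrizeZ n x₂) k‖ ^ 2) :
    x₁ = x₂ ∨ x₁ = -x₂ := by
  classical
  have hm0 : 0 < 4 * n - 3 := by omega
  set c : ℂ := ((Real.sqrt ((4 * n - 3 : ℕ) : ℝ) : ℝ) : ℂ)⁻¹ with hc
  have hcne : c ≠ 0 := by
    apply inv_ne_zero
    rw [Ne, Complex.ofReal_eq_zero]
    exact (Real.sqrt_pos.mpr (by exact_mod_cast hm0)).ne'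
  set P := Qpoly n (x₁ - x₂) with hP
  set Q := Qpoly n (x₁ + x₂) with hQ
  -- pointwise alternative
  have key : ∀ k : Fin (4 * n - 3),
      P.eval (zeta (4 * n - 3) k) = 0 ∨ Q.eval (zeta (4 * n - 3) k) = 0 := by
    intro k
    set a := (dft (4 * n - 3)).mulVec (symmetrizeZ n x₁) k with ha
    set b := (dft (4 * n - 3)).mulVec (symmetrizeZ n x₂) k with hb
    have haim : a.im = 0 := Complex.conj_eq_iff_im.mp (conj_dft_symmetrizeZ n hn x₁ h₁ k)
    have hbim : b.im = 0 := Complex.conj_eq_iff_im.mp (conj_dft_symmetrizeZ n hn x₂ h₂ k)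
    have hre : a.re ^ 2 = b.re ^ 2 := by
      have hnorm := h k
      rw [← ha, ← hb] at hnorm
      rw [Complex.sq_norm, Complex.sq_norm,
        Complex.normSq_apply, Complex.normSq_apply, haim, hbim] at hnorm
      nlinarith [hnorm]
    have hab : a = b ∨ a = -b := by
      rcases sq_eq_sq_iff_eq_or_eq_neg.mp hre with he | he
      · left; exact Complex.ext he (by rw [haim, hbim])
      · right; exact Complex.ext (by simpa using he) (by simp [haim, hbim])
    rcases hab with he | he
    · left
      have hzero : (dft (4 * n - 3)).mulVec (symmetrizeZ n (x₁ - x₂)) k = 0 := by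
        rw [symmetrizeZ_sub, Matrix.mulVec_sub, Pi.sub_apply, ← ha, ← hb, he, sub_self]
      have := Qpoly_eval n hn (x₁ - x₂) k
      rw [hzero, zero_mul] at this
      exact (mul_eq_zero.mp this.symm).resolve_left hcne
    · right
      have hzero : (dft (4 * n - 3)).mulVec (symmetrizeZ n (x₁ + x₂)) k = 0 := by
        rw [symmetrizeZ_add, Matrix.mulVec_add, Pi.add_apply, ← ha, ← hb, he, neg_add_cancel]
      have := Qpoly_eval n hn (x₁ + x₂) k
      rw [hzero, zero_mul] at this
      exact (mul_eq_zero.mp this.symm).resolve_left hcne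
  set A : Finset (Fin (4 * n - 3)) :=
    Finset.univ.filter (fun k => P.eval (zeta (4 * n - 3) k) = 0) with hA
  have hzinj := zeta_injective (4 * n - 3) hm0
  by_cases hcard : 2 * n - 1 ≤ A.card
  · left
    have hP0 : P = 0 := by
      refine Polynomial.eq_zero_of_natDegree_lt_card_of_eval_eq_zero' P
        (A.image (zeta (4 * n - 3))) ?_ ?_
      · intro i hi
        obtain ⟨k, hk, rfl⟩ := Finset.mem_image.mp hi
        exact (Finset.mem_filter.mp hk).2
      · rw [Finset.card_image_of_injOn hzinj.injOn]
        exact lt_of_lt_of_le (Qpoly_natDegree_lt n hn (x₁ - x₂)) hcard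
    have := Qpoly_eq_zero n hn (x₁ - x₂) hP0
    exact sub_eq_zero.mp this
  · right
    have hAc : 2 * n - 1 ≤ Aᶜ.card := by
      rw [Finset.card_compl]
      have hAle : A.card ≤ 2 * n - 2 := by omega
      have : Fintype.card (Fin (4 * n - 3)) = 4 * n - 3 := Fintype.card_fin _
      omega
    have hQ0 : Q = 0 := by
      refine Polynomial.eq_zero_of_natDegree_lt_card_of_eval_eq_zero' Q
        (Aᶜ.image (zeta (4 * n - 3))) ?_ ?_
      · intro i hi
        obtain ⟨k, hk, rfl⟩ := Finset.mem_image.mp hi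
        have hknA : k ∉ A := Finset.mem_compl.mp hk
        have : ¬ P.eval (zeta (4 * n - 3) k) = 0 := by
          intro hcontra
          exact hknA (Finset.mem_filter.mpr ⟨Finset.mem_univ k, hcontra⟩)
        exact (key k).resolve_left this
      · rw [Finset.card_image_of_injOn hzinj.injOn]
        exact lt_of_lt_of_le (Qpoly_natDegree_lt n hn (x₁ + x₂)) hAc
    have := Qpoly_eq_zero n hn (x₁ + x₂) hQ0
    exact eq_neg_of_add_eq_zero_left this
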